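/- Let S be an intra-regular AG-groupoid with left identity. Then every element a of S can be written as a = (((x*e)*y)*a)*a for some x, y in S (where e is the left identity); consequently every fuzzy left ideal μ of S is idempotent under the sup-min convolution product: μ∘μ = μ. -/
import Mathlib


/-- In an intra-regular AG-groupoid with left identity, every a equals
    (((x*e)*y)*a)*a for some x, y; consequently every fuzzy left ideal is
    idempotent under the sup-min convolution product. -/
theorem fuzzy_left_idempotent {S : Type*} (mul : S → S → S)
    (hinv : ∀ a b c : S, mul (mul a b) c = mul (mul c b) a)
    (e : S) (he : ∀ x : S, mul e x = x)
    (hintra : ∀ a : S, ∃ x y : S, a = mul (mul x (mul a a)) y) :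
    (∀ a : S, ∃ x y : S, a = mul (mul (mul (mul x e) y) a) a) ∧
    (∀ μ : S → ℝ, (∀ x, 0 ≤ μ x) → (∀ x, μ x ≤ 1) →
      (∀ u v : S, μ v ≤ μ (mul u v)) →
      (∀ a : S,
        sSup {t : ℝ | ∃ b c : S, a = mul b c ∧ t = min (μ b) (μ c)}
          = μ a)) := by
  -- medial law
  have hmed : ∀ a b c d : S,
      mul (mul a b) (mul c d) = mul (mul a c) (mul b d) := by
    intro a b c d
    rw [hinv a b (mul c d), hinv c d b, hinv (mul b d) c a]
  -- swap law : a(bc) = b(ac)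
  have hswap : ∀ a b c : S, mul a (mul b c) = mul b (mul a c) := by
    intro a b c
    rw [← he a, ← he b, hmed, he, he a]
  have hdecomp : ∀ a : S, ∃ x y : S,
      a = mul (mul (mul (mul x e) y) a) a := by
    intro a
    obtain ⟨x, y, hxy⟩ := hintra a
    refine ⟨x, y, ?_⟩
    calc a = mul (mul x (mul a a)) y := hxy
      _ = mul (mul x (mul a a)) (mul e y) := by rw [he]
      _ = mul (mul x e) (mul (mul a a) y) := hmed ..
      _ = mul (mul a a) (mul (mul x e) y) := hswap ..
      _ = mul (mul (mul (mul x e) y) a) a := (hinv ..).symm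
  refine ⟨hdecomp, ?_⟩
  intro μ hμ0 _ hli a
  obtain ⟨x, y, hxy⟩ := hdecomp a
  have hmem : μ a ∈ {t : ℝ | ∃ b c : S, a = mul b c ∧ t = min (μ b) (μ c)} := by
    refine ⟨mul (mul (mul x e) y) a, a, hxy, ?_⟩
    exact (min_eq_right (hli _ _)).symm
  apply le_antisymm
  · apply Real.sSup_le
    · rintro t ⟨b, c, hbc, rfl⟩
      calc min (μ b) (μ c) ≤ μ c := min_le_right _ _
        _ ≤ μ (mul b c) := hli b c
        _ = μ a := by rw [← hbc]
    · exact hμ0 a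
  · refine le_csSup ⟨μ a, ?_⟩ hmem
    rintro t ⟨b, c, hbc, rfl⟩
    calc min (μ b) (μ c) ≤ μ c := min_le_right _ _
      _ ≤ μ (mul b c) := hli b c
      _ = μ a := by rw [← hbc]
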